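/- Let X be an ideal of L⁰(Ω, Σ, ℙ) containing the constants and Y a sublattice of X with 1 ∈ Y. Then Y is order closed in X if and only if Y = L⁰(σ(Y)) ∩ X, where σ(Y) is the smallest sub-σ-algebra of Σ making all members of Y measurable and containing all ℙ-null sets. -/

import Mathlib

open MeasureTheory Filter

universe u

variable {Ω : Type u}

/-- An ideal (solid subspace) of `L⁰`. -/
def IsIdealL0 {m0 : MeasurableSpace Ω} {μ : Measure Ω} (X : Submodule ℝ (Ω →ₘ[μ] ℝ)) : Prop :=
  ∀ x y : Ω →ₘ[μ] ℝ, |x| ≤ |y| → y ∈ X → x ∈ X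

/-- Order convergence of a net `y` to `x` within the subspace `X` of `L⁰`: there is a net
`z` in `X`, antitone, with infimum `0` relative to `X`, eventually dominating `|y a - x|`. -/
def OrderConvNetIn {m0 : MeasurableSpace Ω} {μ : Measure Ω} (X : Submodule ℝ (Ω →ₘ[μ] ℝ))
    {ι : Type*} [Preorder ι] (y : ι → (Ω →ₘ[μ] ℝ)) (x : Ω →ₘ[μ] ℝ) : Prop :=
  ∃ z : ι → (Ω →ₘ[μ] ℝ), (∀ a, z a ∈ X) ∧ Antitone z ∧ (∀ a, 0 ≤ z a) ∧
    (∀ h ∈ X, (∀ a, h ≤ z a) → h ≤ 0) ∧ ∀ᶠ a in atTop, |y a - x| ≤ z a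

/-- A subset `Y` of `X ⊆ L⁰` is order closed in `X` if it contains the limit of any net of
its elements order-converging (within `X`) to an element of `X`. -/
def OrderClosedIn {m0 : MeasurableSpace Ω} {μ : Measure Ω} (X : Submodule ℝ (Ω →ₘ[μ] ℝ))
    (Y : Set (Ω →ₘ[μ] ℝ)) : Prop :=
  ∀ (ι : Type u) (_ : Preorder ι) (_ : IsDirected ι (· ≤ ·)) (_ : Nonempty ι)
    (y : ι → (Ω →ₘ[μ] ℝ)) (x : Ω →ₘ[μ] ℝ),
    (∀ a, y a ∈ Y) → x ∈ X → OrderConvNetIn X y x → x ∈ Y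

section Aux
variable {m0 : MeasurableSpace Ω} {μ : Measure Ω}
open Set
namespace L22Aux


/-- sup closure of a sublattice submodule -/
lemma sup_mem (Y : Submodule ℝ (Ω →ₘ[μ] ℝ)) (hsub : ∀ y ∈ Y, |y| ∈ Y)
    {f g : Ω →ₘ[μ] ℝ} (hf : f ∈ Y) (hg : g ∈ Y) : f ⊔ g ∈ Y := by
  have : f ⊔ g = (2⁻¹ : ℝ) • (f + g + |g - f|) := by
    refine AEEqFun.ext ?_
    filter_upwards [AEEqFun.coeFn_sup f g, AEEqFun.coeFn_smul (2⁻¹ : ℝ) (f + g + |g - f|),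
      AEEqFun.coeFn_add (f + g) |g - f|, AEEqFun.coeFn_add f g, AEEqFun.coeFn_abs (g - f),
      AEEqFun.coeFn_sub g f] with ω h1 h2 h3 h4 h5 h6
    rw [h1, h2]
    simp only [Pi.smul_apply, h3, Pi.add_apply, h4, h5, h6, Pi.sub_apply, smul_eq_mul]
    have := sup_eq_half_smul_add_add_abs_sub' ℝ (f ω) (g ω)
    simpa using this
  rw [this]
  exact Y.smul_mem _ (Y.add_mem (Y.add_mem hf hg) (hsub _ (Y.sub_mem hg hf)))

lemma inf_mem (Y : Submodule ℝ (Ω →ₘ[μ] ℝ)) (hsub : ∀ y ∈ Y, |y| ∈ Y)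
    {f g : Ω →ₘ[μ] ℝ} (hf : f ∈ Y) (hg : g ∈ Y) : f ⊓ g ∈ Y := by
  have : f ⊓ g = -(-f ⊔ -g) := by
    refine AEEqFun.ext ?_
    filter_upwards [AEEqFun.coeFn_inf f g, AEEqFun.coeFn_neg (-f ⊔ -g),
      AEEqFun.coeFn_sup (-f) (-g), AEEqFun.coeFn_neg f, AEEqFun.coeFn_neg g] with ω h1 h2 h3 h4 h5
    rw [h1, h2]
    simp only [Pi.neg_apply, h3, h4, h5]
    rw [neg_sup]; simp
  rw [this]
  exact Y.neg_mem (sup_mem Y hsub (Y.neg_mem hf) (Y.neg_mem hg))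

/-- If a sequence in Y is dominated towards x by an a.e.-null-convergent antitone
sequence in X, then it order converges (as a `ULift ℕ` net). -/
lemma orderConv_of_seq (X : Submodule ℝ (Ω →ₘ[μ] ℝ))
    (y : ℕ → (Ω →ₘ[μ] ℝ)) (x : Ω →ₘ[μ] ℝ) (z : ℕ → (Ω →ₘ[μ] ℝ))
    (hzX : ∀ n, z n ∈ X) (hza : Antitone z) (hz0 : ∀ n, 0 ≤ z n)
    (hzt : ∀ᵐ ω ∂μ, Tendsto (fun n => z n ω) atTop (nhds 0))
    (hdom : ∀ n, |y n - x| ≤ z n) :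
    OrderConvNetIn X (fun a : ULift.{u} ℕ => y a.down) x := by
  refine ⟨fun a => z a.down, fun a => hzX _, ?_, fun a => hz0 _, ?_, ?_⟩
  · intro a b hab
    exact hza hab
  · intro h hh hle
    rw [← AEEqFun.coeFn_le]
    have hle' : ∀ n : ℕ, ⇑h ≤ᵐ[μ] ⇑(z n) := fun n => AEEqFun.coeFn_le.2 (hle ⟨n⟩)
    have hc : ∀ᵐ ω ∂μ, ∀ n : ℕ, h ω ≤ z n ω := ae_all_iff.2 hle'
    filter_upwards [hc, hzt, AEEqFun.coeFn_zero (α := Ω) (μ := μ) (β := ℝ)] with ω h1 h2 h0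
    rw [h0]
    exact le_of_tendsto_of_tendsto' tendsto_const_nhds h2 h1
  · exact Eventually.of_forall fun a => hdom a.down

/-- Use order closedness on a dominated a.e.-convergent sequence. -/
lemma mem_of_seq (X : Submodule ℝ (Ω →ₘ[μ] ℝ)) {Y : Submodule ℝ (Ω →ₘ[μ] ℝ)}
    (hOC : OrderClosedIn X (Y : Set (Ω →ₘ[μ] ℝ)))
    (y : ℕ → (Ω →ₘ[μ] ℝ)) (x : Ω →ₘ[μ] ℝ) (hy : ∀ n, y n ∈ Y) (hx : x ∈ X)
    (z : ℕ → (Ω →ₘ[μ] ℝ))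
    (hzX : ∀ n, z n ∈ X) (hza : Antitone z) (hz0 : ∀ n, 0 ≤ z n)
    (hzt : ∀ᵐ ω ∂μ, Tendsto (fun n => z n ω) atTop (nhds 0))
    (hdom : ∀ n, |y n - x| ≤ z n) : x ∈ Y :=
  hOC (ULift.{u} ℕ) inferInstance inferInstance inferInstance
    (fun a => y a.down) x (fun a => hy a.down) hx
    (orderConv_of_seq X y x z hzX hza hz0 hzt hdom)



-- pointwise helpers
noncomputable def phi (r t : ℝ) (n : ℕ) : ℝ := (((n : ℝ) * (t - r)) ⊓ 1) ⊔ 0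

lemma phi_mono (r t : ℝ) : Monotone (phi r t) := by
  intro n m hnm
  unfold phi
  rcases le_or_gt t r with h | h
  · have h0 : ∀ k : ℕ, (k : ℝ) * (t - r) ⊓ 1 ≤ 0 :=
      fun k => inf_le_left.trans (mul_nonpos_of_nonneg_of_nonpos (Nat.cast_nonneg k) (by linarith))
    rw [sup_eq_right.2 (h0 n), sup_eq_right.2 (h0 m)]
  · have : (n : ℝ) * (t - r) ≤ (m : ℝ) * (t - r) :=
      mul_le_mul_of_nonneg_right (Nat.cast_le.2 hnm) (by linarith)
    exact sup_le_sup_right (inf_le_inf_right _ this) _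

lemma phi_le (r t : ℝ) (n : ℕ) : phi r t n ≤ if r < t then 1 else 0 := by
  unfold phi
  split_ifs with h
  · exact sup_le (inf_le_right) zero_le_one
  · push_neg at h
    exact sup_le (inf_le_left.trans
      (mul_nonpos_of_nonneg_of_nonpos (Nat.cast_nonneg n) (by linarith))) le_rfl

lemma phi_nonneg (r t : ℝ) (n : ℕ) : 0 ≤ phi r t n := le_sup_right

lemma phi_tendsto (r t : ℝ) :
    Tendsto (phi r t) atTop (nhds (if r < t then 1 else 0)) := by
  split_ifs with h
  · have hpos : 0 < t - r := by linarith
    refine Tendsto.congr' ?_ tendsto_const_nhds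
    filter_upwards [eventually_ge_atTop ⌈1 / (t - r)⌉₊] with n hn
    have h1 : 1 / (t - r) ≤ (n : ℝ) := le_trans (Nat.le_ceil _) (Nat.cast_le.2 hn)
    have : (1 : ℝ) ≤ (n : ℝ) * (t - r) := by
      rw [div_le_iff₀ hpos] at h1; linarith
    unfold phi
    rw [inf_eq_right.2 this, sup_eq_left.2 zero_le_one]
  · push_neg at h
    refine Tendsto.congr' (Eventually.of_forall fun n => ?_) tendsto_const_nhds
    unfold phi
    rw [sup_eq_right.2 (inf_le_left.trans
      (mul_nonpos_of_nonneg_of_nonpos (Nat.cast_nonneg n) (by linarith)))]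

lemma indicator_apply_eq (g : Ω → ℝ) (r : ℝ) (ω : Ω) :
    (g ⁻¹' Ioi r).indicator (fun _ => (1:ℝ)) ω = if r < g ω then 1 else 0 := by
  classical
  rw [Set.indicator_apply]
  simp only [Set.mem_preimage, Set.mem_Ioi]

/-- The AEEqFun class of the indicator of `{g > r}`. -/
noncomputable def indFun (g : Ω →ₘ[μ] ℝ) (r : ℝ) : Ω →ₘ[μ] ℝ :=
  AEEqFun.mk ((⇑g ⁻¹' Ioi r).indicator (fun _ => (1:ℝ)))
    ((measurable_one.indicator (g.measurable measurableSet_Ioi)).aestronglyMeasurable)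

lemma abs_le_abs_of_ae {f g : Ω →ₘ[μ] ℝ} (h : ∀ᵐ ω ∂μ, |f ω| ≤ |g ω|) : |f| ≤ |g| := by
  rw [← AEEqFun.coeFn_le]
  filter_upwards [AEEqFun.coeFn_abs f, AEEqFun.coeFn_abs g, h] with ω h1 h2 h3
  rw [h1, h2]; exact h3

lemma one_mem_X (X : Submodule ℝ (Ω →ₘ[μ] ℝ))
    (hconst : ∀ c : ℝ, AEEqFun.const Ω (β := ℝ) c ∈ X) : (1 : Ω →ₘ[μ] ℝ) ∈ X := by
  have : (1 : Ω →ₘ[μ] ℝ) = AEEqFun.const Ω (β := ℝ) 1 := rfl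
  rw [this]; exact hconst 1

lemma indFun_mem_X (X : Submodule ℝ (Ω →ₘ[μ] ℝ)) (hX : IsIdealL0 X)
    (hconst : ∀ c : ℝ, AEEqFun.const Ω (β := ℝ) c ∈ X)
    (g : Ω →ₘ[μ] ℝ) (r : ℝ) : indFun g r ∈ X := by
  refine hX _ _ (abs_le_abs_of_ae ?_) (one_mem_X X hconst)
  filter_upwards [AEEqFun.coeFn_mk ((⇑g ⁻¹' Ioi r).indicator (fun _ => (1:ℝ)))
      ((measurable_one.indicator (g.measurable measurableSet_Ioi)).aestronglyMeasurable),
    AEEqFun.coeFn_one (α := Ω) (μ := μ) (β := ℝ)] with ω h1 h2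
  show |(indFun g r) ω| ≤ _
  rw [show ⇑(indFun g r) = ⇑(AEEqFun.mk ((⇑g ⁻¹' Ioi r).indicator (fun _ => (1:ℝ)))
      ((measurable_one.indicator (g.measurable measurableSet_Ioi)).aestronglyMeasurable) : Ω →ₘ[μ] ℝ) from rfl,
    h1, h2, indicator_apply_eq]
  split_ifs <;> simp

lemma coeFn_indFun (g : Ω →ₘ[μ] ℝ) (r : ℝ) :
    ∀ᵐ ω ∂μ, (indFun g r) ω = if r < g ω then 1 else 0 := by
  filter_upwards [AEEqFun.coeFn_mk ((⇑g ⁻¹' Ioi r).indicator (fun _ => (1:ℝ)))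
      ((measurable_one.indicator (g.measurable measurableSet_Ioi)).aestronglyMeasurable)] with ω h1
  rw [show ⇑(indFun g r) = ⇑(AEEqFun.mk ((⇑g ⁻¹' Ioi r).indicator (fun _ => (1:ℝ)))
      ((measurable_one.indicator (g.measurable measurableSet_Ioi)).aestronglyMeasurable) : Ω →ₘ[μ] ℝ) from rfl,
    h1, indicator_apply_eq]

lemma indFun_mem_Y (X : Submodule ℝ (Ω →ₘ[μ] ℝ)) (hX : IsIdealL0 X)
    (hconst : ∀ c : ℝ, AEEqFun.const Ω (β := ℝ) c ∈ X)
    {Y : Submodule ℝ (Ω →ₘ[μ] ℝ)} (hYX : (Y : Set (Ω →ₘ[μ] ℝ)) ⊆ X)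
    (hsub : ∀ y ∈ Y, |y| ∈ Y) (h1 : (1 : Ω →ₘ[μ] ℝ) ∈ Y)
    (hOC : OrderClosedIn X (Y : Set (Ω →ₘ[μ] ℝ)))
    {g : Ω →ₘ[μ] ℝ} (hg : g ∈ Y) (r : ℝ) : indFun g r ∈ Y := by
  classical
  set u : ℕ → (Ω →ₘ[μ] ℝ) := fun n => (((n:ℝ) • (g - r • (1 : Ω →ₘ[μ] ℝ))) ⊓ 1) ⊔ 0 with hu_def
  have huY : ∀ n, u n ∈ Y := fun n =>
    sup_mem Y hsub (inf_mem Y hsub (Y.smul_mem _ (Y.sub_mem hg (Y.smul_mem _ h1))) h1) Y.zero_mem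
  have hu : ∀ᵐ ω ∂μ, ∀ n : ℕ, (u n) ω = phi r (g ω) n := by
    rw [ae_all_iff]
    intro n
    filter_upwards [AEEqFun.coeFn_sup (((n:ℝ) • (g - r • (1 : Ω →ₘ[μ] ℝ))) ⊓ 1) 0,
      AEEqFun.coeFn_inf ((n:ℝ) • (g - r • (1 : Ω →ₘ[μ] ℝ))) 1,
      AEEqFun.coeFn_smul (n:ℝ) (g - r • (1 : Ω →ₘ[μ] ℝ)),
      AEEqFun.coeFn_sub g (r • (1 : Ω →ₘ[μ] ℝ)),
      AEEqFun.coeFn_smul r (1 : Ω →ₘ[μ] ℝ),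
      AEEqFun.coeFn_one (α := Ω) (μ := μ) (β := ℝ),
      AEEqFun.coeFn_zero (α := Ω) (μ := μ) (β := ℝ)] with ω e1 e2 e3 e4 e5 e6 e7
    show (u n) ω = _
    rw [hu_def]
    simp only [e1, e2, e3, e4, e5, Pi.smul_apply, Pi.sub_apply, Pi.zero_apply, smul_eq_mul] at *
    rw [e6]
    simp only [Pi.one_apply, e7]
    unfold phi
    simp [mul_comm]
  set x := indFun g r with hx_def
  have hxX : x ∈ X := indFun_mem_X X hX hconst g r
  set z : ℕ → (Ω →ₘ[μ] ℝ) := fun n => x - u n with hz_def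
  have hzm : ∀ᵐ ω ∂μ, ∀ n : ℕ,
      (z n) ω = (if r < g ω then 1 else 0) - phi r (g ω) n := by
    rw [ae_all_iff]
    intro n
    filter_upwards [AEEqFun.coeFn_sub x (u n), hu, coeFn_indFun g r] with ω e1 e2 e3
    show (z n) ω = _
    rw [hz_def]
    simp only [e1, Pi.sub_apply, e3, e2 n]
    rw [hx_def, e3]
  -- key pointwise inequality : phi ≤ indicator value
  have hphile : ∀ ω n, phi r (g ω) n ≤ (if r < g ω then 1 else 0) := fun ω n => phi_le r (g ω) n
  refine mem_of_seq X hOC u x huY hxX z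
    (fun n => X.sub_mem hxX (hYX (huY n)))
    (antitone_nat_of_succ_le fun n => ?_)
    (fun n => ?_) ?_ (fun n => ?_)
  · rw [← AEEqFun.coeFn_le]
    filter_upwards [hzm] with ω e
    rw [e n, e (n+1)]
    have := phi_mono r (g ω) (Nat.le_succ n)
    linarith
  · rw [← AEEqFun.coeFn_le]
    filter_upwards [hzm, AEEqFun.coeFn_zero (α := Ω) (μ := μ) (β := ℝ)] with ω e e0
    rw [e n, Pi.zero_apply] at *
    rw [e0]
    have := hphile ω n
    linarith
  · filter_upwards [hzm] with ω e
    have : Tendsto (fun n => (if r < g ω then (1:ℝ) else 0) - phi r (g ω) n) atTop (nhds 0) := by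
      have := (phi_tendsto r (g ω)).const_sub (if r < g ω then (1:ℝ) else 0)
      simpa using this
    exact Tendsto.congr (fun n => (e n).symm) this
  · rw [← AEEqFun.coeFn_le]
    filter_upwards [hzm, AEEqFun.coeFn_abs (u n - x), AEEqFun.coeFn_sub (u n) x, hu,
      coeFn_indFun g r] with ω e1 e2 e3 e4 e5
    rw [e2, e3, Pi.sub_apply, e1 n, e4 n, e5, abs_sub_comm]
    have h1' := hphile ω n
    rw [abs_of_nonneg (by linarith)]

/-- order closedness upgrade for a.e.-monotone sequences. -/
lemma mem_of_monotone_ae (X : Submodule ℝ (Ω →ₘ[μ] ℝ)) {Y : Submodule ℝ (Ω →ₘ[μ] ℝ)}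
    (hOC : OrderClosedIn X (Y : Set (Ω →ₘ[μ] ℝ))) (hYX : (Y : Set (Ω →ₘ[μ] ℝ)) ⊆ X)
    (v : ℕ → (Ω →ₘ[μ] ℝ)) (x : Ω →ₘ[μ] ℝ) (hv : ∀ n, v n ∈ Y) (hxX : x ∈ X)
    (hmono : ∀ᵐ ω ∂μ, ∀ n, (v n) ω ≤ (v (n+1)) ω)
    (htend : ∀ᵐ ω ∂μ, Tendsto (fun n => (v n) ω) atTop (nhds (x ω))) : x ∈ Y := by
  have hmono' : ∀ᵐ ω ∂μ, ∀ n m, n ≤ m → (v n) ω ≤ (v m) ω := by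
    filter_upwards [hmono] with ω e
    exact fun n m hnm => monotone_nat_of_le_succ e hnm
  have hle : ∀ᵐ ω ∂μ, ∀ n, (v n) ω ≤ x ω := by
    filter_upwards [hmono', htend] with ω e1 e2
    intro n
    refine ge_of_tendsto e2 ?_
    filter_upwards [eventually_ge_atTop n] with m hm using e1 n m hm
  refine mem_of_seq X hOC v x hv hxX (fun n => x - v n)
    (fun n => X.sub_mem hxX (hYX (hv n)))
    (antitone_nat_of_succ_le fun n => ?_) (fun n => ?_) ?_ (fun n => ?_)
  · rw [← AEEqFun.coeFn_le]
    filter_upwards [AEEqFun.coeFn_sub x (v n), AEEqFun.coeFn_sub x (v (n+1)), hmono]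
      with ω e1 e2 e3
    rw [e1, e2, Pi.sub_apply, Pi.sub_apply]
    have := e3 n; linarith
  · rw [← AEEqFun.coeFn_le]
    filter_upwards [AEEqFun.coeFn_sub x (v n), hle,
      AEEqFun.coeFn_zero (α := Ω) (μ := μ) (β := ℝ)] with ω e1 e2 e0
    rw [e1, e0, Pi.sub_apply, Pi.zero_apply]
    have := e2 n; linarith
  · filter_upwards [ae_all_iff.2 fun n => AEEqFun.coeFn_sub x (v n), htend] with ω e1 e2
    have : Tendsto (fun n => x ω - (v n) ω) atTop (nhds 0) := by
      have := e2.const_sub (x ω); simpa using this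
    exact Tendsto.congr (fun n => by rw [e1 n, Pi.sub_apply]) this
  · rw [← AEEqFun.coeFn_le]
    filter_upwards [AEEqFun.coeFn_abs (v n - x), AEEqFun.coeFn_sub (v n) x,
      AEEqFun.coeFn_sub x (v n), hle] with ω e1 e2 e3 e4
    rw [e1, e2, e3, Pi.sub_apply, Pi.sub_apply, abs_sub_comm]
    have := e4 n
    rw [abs_of_nonneg (by linarith)]

/-- The AEEqFun class of the indicator of a measurable set. -/
noncomputable def indMk (B : Set Ω) (hB : MeasurableSet B) : Ω →ₘ[μ] ℝ :=
  AEEqFun.mk (B.indicator (fun _ => (1:ℝ)))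
    ((measurable_one.indicator hB).aestronglyMeasurable)

lemma indMk_coe (B : Set Ω) (hB : MeasurableSet B) :
    ∀ᵐ ω ∂μ, (indMk (μ := μ) B hB) ω = B.indicator (fun _ => (1:ℝ)) ω :=
  AEEqFun.coeFn_mk _ _

lemma indMk_mem_X (X : Submodule ℝ (Ω →ₘ[μ] ℝ)) (hX : IsIdealL0 X)
    (hconst : ∀ c : ℝ, AEEqFun.const Ω (β := ℝ) c ∈ X)
    (B : Set Ω) (hB : MeasurableSet B) : indMk (μ := μ) B hB ∈ X := by
  refine hX _ _ (abs_le_abs_of_ae ?_) (one_mem_X X hconst)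
  filter_upwards [indMk_coe (μ := μ) B hB, AEEqFun.coeFn_one (α := Ω) (μ := μ) (β := ℝ)]
    with ω h1 h2
  rw [h1, h2, Pi.one_apply]
  classical
  rw [Set.indicator_apply]
  split_ifs <;> simp

lemma indMk_union (B C : Set Ω) (hB : MeasurableSet B) (hC : MeasurableSet C) :
    indMk (μ := μ) (B ∪ C) (hB.union hC) = indMk (μ := μ) B hB ⊔ indMk (μ := μ) C hC := by
  refine AEEqFun.ext ?_
  filter_upwards [indMk_coe (μ := μ) (B ∪ C) (hB.union hC),
    AEEqFun.coeFn_sup (indMk (μ := μ) B hB) (indMk (μ := μ) C hC),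
    indMk_coe (μ := μ) B hB, indMk_coe (μ := μ) C hC] with ω e1 e2 e3 e4
  rw [e1, e2, e3, e4]
  classical
  by_cases hb : ω ∈ B <;> by_cases hc : ω ∈ C <;>
    simp [Set.indicator_apply, hb, hc]

lemma indMk_compl (B : Set Ω) (hB : MeasurableSet B) :
    indMk (μ := μ) Bᶜ hB.compl = 1 - indMk (μ := μ) B hB := by
  refine AEEqFun.ext ?_
  filter_upwards [indMk_coe (μ := μ) Bᶜ hB.compl,
    AEEqFun.coeFn_sub (1 : Ω →ₘ[μ] ℝ) (indMk (μ := μ) B hB),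
    AEEqFun.coeFn_one (α := Ω) (μ := μ) (β := ℝ), indMk_coe (μ := μ) B hB] with ω e1 e2 e3 e4
  rw [e1, e2, Pi.sub_apply, e3, e4, Pi.one_apply]
  classical
  by_cases hb : ω ∈ B <;> simp [Set.indicator_apply, hb]

lemma ind_eq_ind_iff (A B : Set Ω) (ω : Ω) :
    A.indicator (fun _ => (1:ℝ)) ω = B.indicator (fun _ => (1:ℝ)) ω ↔ (ω ∈ A ↔ ω ∈ B) := by
  classical
  by_cases ha : ω ∈ A <;> by_cases hb : ω ∈ B <;> simp [Set.indicator_apply, ha, hb]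

/-- indicator of countable union of `Y`-sets is in `Y`. -/
lemma indMk_iUnion_mem_Y (X : Submodule ℝ (Ω →ₘ[μ] ℝ)) (hX : IsIdealL0 X)
    (hconst : ∀ c : ℝ, AEEqFun.const Ω (β := ℝ) c ∈ X)
    {Y : Submodule ℝ (Ω →ₘ[μ] ℝ)} (hYX : (Y : Set (Ω →ₘ[μ] ℝ)) ⊆ X)
    (hsub : ∀ y ∈ Y, |y| ∈ Y)
    (hOC : OrderClosedIn X (Y : Set (Ω →ₘ[μ] ℝ)))
    (B : ℕ → Set Ω) (hB : ∀ n, MeasurableSet (B n))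
    (hBY : ∀ n, indMk (μ := μ) (B n) (hB n) ∈ Y) :
    indMk (μ := μ) (⋃ n, B n) (MeasurableSet.iUnion hB) ∈ Y := by
  classical
  set C : ℕ → Set Ω := fun n => ⋃ k ≤ n, B k with hC_def
  have hCmeas : ∀ n, MeasurableSet (C n) :=
    fun n => MeasurableSet.biUnion (Set.to_countable _) (fun k _ => hB k)
  have hCY : ∀ n, indMk (μ := μ) (C n) (hCmeas n) ∈ Y := by
    intro n
    induction n with
    | zero =>
      have hC0 : C 0 = B 0 := by
        simp [hC_def, Nat.le_zero]
      have : indMk (μ := μ) (C 0) (hCmeas 0) = indMk (μ := μ) (B 0) (hB 0) := by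
        congr 1
      rw [this]; exact hBY 0
    | succ n ih =>
      have hCs : C (n+1) = C n ∪ B (n+1) := by
        rw [hC_def]
        exact Set.biUnion_le_succ B n
      have : indMk (μ := μ) (C (n+1)) (hCmeas (n+1))
          = indMk (μ := μ) (C n) (hCmeas n) ⊔ indMk (μ := μ) (B (n+1)) (hB (n+1)) := by
        rw [← indMk_union]
        congr 1
      rw [this]
      exact sup_mem Y hsub ih (hBY (n+1))
  refine mem_of_monotone_ae X hOC hYX (fun n => indMk (μ := μ) (C n) (hCmeas n)) _ hCY
    (indMk_mem_X X hX hconst _ _) ?_ ?_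
  · filter_upwards [ae_all_iff.2 fun n => indMk_coe (μ := μ) (C n) (hCmeas n)] with ω e
    intro n
    rw [e n, e (n+1)]
    refine Set.indicator_le_indicator_of_subset ?_ (fun _ => zero_le_one) ω
    rw [hC_def]
    exact Set.biUnion_subset_biUnion_left (fun k hk => le_trans hk (Nat.le_succ n))
  · filter_upwards [ae_all_iff.2 fun n => indMk_coe (μ := μ) (C n) (hCmeas n),
      indMk_coe (μ := μ) (⋃ n, B n) (MeasurableSet.iUnion hB)] with ω e1 e2
    rw [e2]
    by_cases hω : ω ∈ ⋃ n, B n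
    · obtain ⟨k, hk⟩ := Set.mem_iUnion.1 hω
      refine Tendsto.congr' ?_ tendsto_const_nhds
      filter_upwards [eventually_ge_atTop k] with n hn
      have hωC : ω ∈ C n := Set.mem_biUnion hn hk
      rw [e1 n, Set.indicator_of_mem hωC, Set.indicator_of_mem hω]
    · have : ∀ n, ω ∉ C n := by
        intro n hmem
        obtain ⟨k, _, hk⟩ := Set.mem_iUnion₂.1 hmem
        exact hω (Set.mem_iUnion.2 ⟨k, hk⟩)
      rw [Set.indicator_of_notMem hω]
      refine Tendsto.congr (fun n => ?_) (tendsto_const_nhds (x := (0:ℝ)))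
      rw [e1 n, Set.indicator_of_notMem (this n)]

variable (μ) in
/-- sets whose indicator is (a.e.) in `Y`. -/
def pY (Y : Submodule ℝ (Ω →ₘ[μ] ℝ)) (A : Set Ω) : Prop :=
  ∃ B : Set Ω, ∃ hB : MeasurableSet B,
    (A.indicator (fun _ => (1:ℝ)) =ᵐ[μ] B.indicator (fun _ => (1:ℝ))) ∧
    indMk (μ := μ) B hB ∈ Y

lemma pY_empty (Y : Submodule ℝ (Ω →ₘ[μ] ℝ)) : pY μ Y (∅ : Set Ω) := by
  refine ⟨∅, MeasurableSet.empty, EventuallyEq.rfl, ?_⟩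
  have : indMk (μ := μ) (∅ : Set Ω) MeasurableSet.empty = 0 := by
    refine AEEqFun.ext ?_
    filter_upwards [indMk_coe (μ := μ) (∅ : Set Ω) MeasurableSet.empty,
      AEEqFun.coeFn_zero (α := Ω) (μ := μ) (β := ℝ)] with ω e1 e2
    rw [e1, e2]; simp
  rw [this]; exact Y.zero_mem

lemma pY_compl {Y : Submodule ℝ (Ω →ₘ[μ] ℝ)} (h1Y : (1 : Ω →ₘ[μ] ℝ) ∈ Y)
    {A : Set Ω} (hA : pY μ Y A) : pY μ Y Aᶜ := by
  obtain ⟨B, hB, hae, hmem⟩ := hA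
  refine ⟨Bᶜ, hB.compl, ?_, ?_⟩
  · filter_upwards [hae] with ω e
    rw [ind_eq_ind_iff] at e ⊢
    simp [e]
  · rw [indMk_compl B hB]
    exact Y.sub_mem h1Y hmem

lemma pY_iUnion (X : Submodule ℝ (Ω →ₘ[μ] ℝ)) (hX : IsIdealL0 X)
    (hconst : ∀ c : ℝ, AEEqFun.const Ω (β := ℝ) c ∈ X)
    {Y : Submodule ℝ (Ω →ₘ[μ] ℝ)} (hYX : (Y : Set (Ω →ₘ[μ] ℝ)) ⊆ X)
    (hsub : ∀ y ∈ Y, |y| ∈ Y)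
    (hOC : OrderClosedIn X (Y : Set (Ω →ₘ[μ] ℝ)))
    {A : ℕ → Set Ω} (hA : ∀ n, pY μ Y (A n)) : pY μ Y (⋃ n, A n) := by
  classical
  choose B hB hae hmem using hA
  refine ⟨⋃ n, B n, MeasurableSet.iUnion hB, ?_, ?_⟩
  · filter_upwards [ae_all_iff.2 hae] with ω e
    rw [ind_eq_ind_iff]
    constructor
    · rintro hω
      obtain ⟨n, hn⟩ := Set.mem_iUnion.1 hω
      exact Set.mem_iUnion.2 ⟨n, ((ind_eq_ind_iff _ _ ω).1 (e n)).1 hn⟩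
    · rintro hω
      obtain ⟨n, hn⟩ := Set.mem_iUnion.1 hω
      exact Set.mem_iUnion.2 ⟨n, ((ind_eq_ind_iff _ _ ω).1 (e n)).2 hn⟩
  · exact indMk_iUnion_mem_Y X hX hconst hYX hsub hOC B hB hmem

variable (μ) in
/-- The σ-algebra of sets whose indicator is a.e. in `Y`. -/
def sigmaD (X : Submodule ℝ (Ω →ₘ[μ] ℝ)) (hX : IsIdealL0 X)
    (hconst : ∀ c : ℝ, AEEqFun.const Ω (β := ℝ) c ∈ X)
    {Y : Submodule ℝ (Ω →ₘ[μ] ℝ)} (hYX : (Y : Set (Ω →ₘ[μ] ℝ)) ⊆ X)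
    (hsub : ∀ y ∈ Y, |y| ∈ Y) (h1Y : (1 : Ω →ₘ[μ] ℝ) ∈ Y)
    (hOC : OrderClosedIn X (Y : Set (Ω →ₘ[μ] ℝ))) : MeasurableSpace Ω where
  MeasurableSet' := pY μ Y
  measurableSet_empty := pY_empty Y
  measurableSet_compl := fun _ hA => pY_compl h1Y hA
  measurableSet_iUnion := fun _ hA => pY_iUnion X hX hconst hYX hsub hOC hA

lemma comap_le_sigmaD (X : Submodule ℝ (Ω →ₘ[μ] ℝ)) (hX : IsIdealL0 X)
    (hconst : ∀ c : ℝ, AEEqFun.const Ω (β := ℝ) c ∈ X)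
    {Y : Submodule ℝ (Ω →ₘ[μ] ℝ)} (hYX : (Y : Set (Ω →ₘ[μ] ℝ)) ⊆ X)
    (hsub : ∀ y ∈ Y, |y| ∈ Y) (h1Y : (1 : Ω →ₘ[μ] ℝ) ∈ Y)
    (hOC : OrderClosedIn X (Y : Set (Ω →ₘ[μ] ℝ)))
    {g : Ω →ₘ[μ] ℝ} (hg : g ∈ Y) :
    MeasurableSpace.comap (⇑g) (inferInstance : MeasurableSpace ℝ) ≤
      sigmaD μ X hX hconst hYX hsub h1Y hOC := by
  have hreal : (inferInstance : MeasurableSpace ℝ)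
      = MeasurableSpace.generateFrom (Set.range Set.Ioi) := borel_eq_generateFrom_Ioi ℝ
  rw [hreal, MeasurableSpace.comap_generateFrom]
  refine MeasurableSpace.generateFrom_le ?_
  rintro t ⟨s, ⟨r, rfl⟩, rfl⟩
  show pY μ Y (⇑g ⁻¹' Set.Ioi r)
  exact ⟨⇑g ⁻¹' Set.Ioi r, g.measurable measurableSet_Ioi, EventuallyEq.rfl,
    indFun_mem_Y X hX hconst hYX hsub h1Y hOC hg r⟩


end L22Aux
end Aux

section Aux2
namespace L22Aux
variable {m' : MeasurableSpace Ω} {m0 : MeasurableSpace Ω} {μ : Measure Ω}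
lemma coeFn_finset_sum {γ : Type} (t : Finset γ) (v : γ → (Ω →ₘ[μ] ℝ)) :
    ∀ᵐ ω ∂μ, (∑ c ∈ t, v c) ω = ∑ c ∈ t, (v c) ω := by
  classical
  induction t using Finset.induction with
  | empty =>
    filter_upwards [AEEqFun.coeFn_zero (α := Ω) (μ := μ) (β := ℝ)] with ω e
    simpa using e
  | insert a t' hnotmem ih =>
    filter_upwards [AEEqFun.coeFn_add (v a) (∑ c ∈ t', v c), ih] with ω e1 e2
    rw [Finset.sum_insert hnotmem, e1, Pi.add_apply, e2, Finset.sum_insert hnotmem]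

lemma simpleFunc_mem_Y (hm'le : m' ≤ m0)
    {Y : Submodule ℝ (Ω →ₘ[μ] ℝ)}
    (hm'D : ∀ s : Set Ω, MeasurableSet[m'] s → pY μ Y s)
    (f : @SimpleFunc Ω m' ℝ) (hf : AEStronglyMeasurable (⇑f) μ) :
    AEEqFun.mk (⇑f) hf ∈ Y := by
  classical
  have hfiber : ∀ c : ℝ, MeasurableSet[m'] (⇑f ⁻¹' {c}) :=
    fun c => @SimpleFunc.measurableSet_fiber Ω ℝ m' f c
  choose B hB hae hmem using fun c => hm'D _ (hfiber c)
  have key : AEEqFun.mk (⇑f) hf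
      = ∑ c ∈ (@SimpleFunc.range Ω ℝ m' f), c • indMk (μ := μ) (B c) (hB c) := by
    refine AEEqFun.ext ?_
    have haeall : ∀ᵐ ω ∂μ, ∀ c ∈ (@SimpleFunc.range Ω ℝ m' f),
        (⇑f ⁻¹' {c}).indicator (fun _ => (1:ℝ)) ω = (B c).indicator (fun _ => (1:ℝ)) ω := by
      rw [Filter.eventually_all_finset]
      intro c _
      exact hae c
    have hcoesmul : ∀ᵐ ω ∂μ, ∀ c ∈ (@SimpleFunc.range Ω ℝ m' f),
        (c • indMk (μ := μ) (B c) (hB c)) ω = c * (B c).indicator (fun _ => (1:ℝ)) ω := by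
      rw [Filter.eventually_all_finset]
      intro c _
      filter_upwards [AEEqFun.coeFn_smul c (indMk (μ := μ) (B c) (hB c)),
        indMk_coe (μ := μ) (B c) (hB c)] with ω e1 e2
      rw [e1, Pi.smul_apply, e2, smul_eq_mul]
    filter_upwards [AEEqFun.coeFn_mk (⇑f) hf,
      coeFn_finset_sum (@SimpleFunc.range Ω ℝ m' f)
        (fun c => c • indMk (μ := μ) (B c) (hB c)), haeall, hcoesmul] with ω e1 e2 e3 e4
    rw [e1, e2]
    have : ∀ c ∈ (@SimpleFunc.range Ω ℝ m' f),
        (c • indMk (μ := μ) (B c) (hB c)) ω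
          = (⇑f ⁻¹' {c}).indicator (fun _ => c) ω := by
      intro c hc
      rw [e4 c hc, ← e3 c hc]
      by_cases hω : ω ∈ ⇑f ⁻¹' {c}
      · rw [Set.indicator_of_mem hω, Set.indicator_of_mem hω]; ring
      · rw [Set.indicator_of_notMem hω, Set.indicator_of_notMem hω]; ring
    rw [Finset.sum_congr rfl this]
    rw [Finset.sum_eq_single (f ω)]
    · rw [Set.indicator_of_mem (by exact rfl)]
    · intro c _ hne
      refine Set.indicator_of_notMem ?_ _
      simp only [Set.mem_preimage, Set.mem_singleton_iff]
      exact fun hc => hne hc.symm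
    · intro hnot
      exact absurd (@SimpleFunc.mem_range_self Ω ℝ m' f ω) hnot
  rw [key]
  exact Y.sum_mem fun c _ => Y.smul_mem c (hmem c)

lemma mem_Y_of_measurable (X : Submodule ℝ (Ω →ₘ[μ] ℝ)) (hX : IsIdealL0 X)
    {Y : Submodule ℝ (Ω →ₘ[μ] ℝ)} (hYX : (Y : Set (Ω →ₘ[μ] ℝ)) ⊆ X)
    (hOC : OrderClosedIn X (Y : Set (Ω →ₘ[μ] ℝ)))
    (hm'le : m' ≤ m0)
    (hm'D : ∀ s : Set Ω, MeasurableSet[m'] s → pY μ Y s)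
    {h : Ω →ₘ[μ] ℝ} (hhX : h ∈ X) {h' : Ω → ℝ}
    (hm : Measurable[m'] h')
    (haeq : ⇑h =ᵐ[μ] h') : h ∈ Y := by
  classical
  have h'm0 : Measurable h' := hm.mono hm'le le_rfl
  set s : ℕ → @SimpleFunc Ω m' ℝ :=
    fun n => @SimpleFunc.approxOn ℝ Ω _ _ _ m' h' hm Set.univ 0 (Set.mem_univ 0) _ n with hs_def
  have hsmeas : ∀ n, Measurable (⇑(s n)) :=
    fun n => (@SimpleFunc.measurable Ω ℝ m' _ (s n)).mono hm'le le_rfl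
  have htend : ∀ ω, Tendsto (fun n => s n ω) atTop (nhds (h' ω)) := by
    intro ω
    exact @SimpleFunc.tendsto_approxOn ℝ Ω _ _ _ m' h' hm Set.univ 0 (Set.mem_univ 0) _ ω
      (by simp)
  have hbound : ∀ n ω, |(s n) ω| ≤ 2 * |h' ω| := by
    intro n ω
    have := @SimpleFunc.edist_approxOn_y0_le ℝ Ω _ _ _ m' h' hm Set.univ 0 (Set.mem_univ 0) _ ω n
    rw [edist_dist, edist_dist, ← ENNReal.ofReal_add dist_nonneg dist_nonneg] at this
    have h2 := (ENNReal.ofReal_le_ofReal_iff (by positivity)).1 this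
    simp only [Real.dist_eq, zero_sub, abs_neg] at h2
    calc |(s n) ω| ≤ |h' ω| + |h' ω| := h2
    _ = 2 * |h' ω| := by ring
  -- the Y-sequence
  set y : ℕ → (Ω →ₘ[μ] ℝ) := fun n => AEEqFun.mk (⇑(s n)) (hsmeas n).aestronglyMeasurable
    with hy_def
  have hyY : ∀ n, y n ∈ Y := fun n => simpleFunc_mem_Y hm'le hm'D (s n) _
  -- dominating sequence
  set F : ℕ → Ω → ENNReal := fun n ω => ⨆ k : ℕ, ENNReal.ofReal |s (n+k) ω - h' ω| with hF_def
  have hFmeas : ∀ n, Measurable (F n) := by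
    intro n
    refine Measurable.iSup fun k => ?_
    exact ENNReal.measurable_ofReal.comp ((hsmeas (n+k)).sub h'm0).abs
  have hFle : ∀ n ω, F n ω ≤ ENNReal.ofReal (3 * |h' ω|) := by
    intro n ω
    refine iSup_le fun k => ENNReal.ofReal_le_ofReal ?_
    calc |s (n+k) ω - h' ω| ≤ |s (n+k) ω| + |h' ω| := abs_sub _ _
    _ ≤ 2 * |h' ω| + |h' ω| := by linarith [hbound (n+k) ω]
    _ = 3 * |h' ω| := by ring
  have hFne : ∀ n ω, F n ω ≠ ⊤ :=
    fun n ω => ((hFle n ω).trans_lt ENNReal.ofReal_lt_top).ne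
  set z : ℕ → (Ω →ₘ[μ] ℝ) := fun n => AEEqFun.mk (fun ω => (F n ω).toReal)
    ((ENNReal.measurable_toReal.comp (hFmeas n)).aestronglyMeasurable) with hz_def
  have hzcoe : ∀ n, ∀ᵐ ω ∂μ, (z n) ω = (F n ω).toReal := fun n => AEEqFun.coeFn_mk _ _
  have hzX : ∀ n, z n ∈ X := by
    intro n
    refine hX _ ((3:ℝ) • h) (abs_le_abs_of_ae ?_) (X.smul_mem _ hhX)
    filter_upwards [hzcoe n, AEEqFun.coeFn_smul (3:ℝ) h, haeq] with ω e1 e2 e3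
    rw [e1, e2, Pi.smul_apply, smul_eq_mul, abs_mul]
    have : |(F n ω).toReal| = (F n ω).toReal := abs_of_nonneg ENNReal.toReal_nonneg
    rw [this, e3]
    calc (F n ω).toReal ≤ (ENNReal.ofReal (3 * |h' ω|)).toReal :=
      ENNReal.toReal_mono ENNReal.ofReal_ne_top (hFle n ω)
    _ = 3 * |h' ω| := ENNReal.toReal_ofReal (by positivity)
    _ ≤ |3| * |h' ω| := by norm_num
  have hFanti : ∀ n ω, F (n+1) ω ≤ F n ω := by
    intro n ω
    refine iSup_le fun k => ?_
    refine le_iSup_of_le (k+1) ?_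
    have : n + 1 + k = n + (k + 1) := by ring
    rw [this]
  have hzanti : Antitone z := by
    refine antitone_nat_of_succ_le fun n => ?_
    rw [← AEEqFun.coeFn_le]
    filter_upwards [hzcoe n, hzcoe (n+1)] with ω e1 e2
    rw [e1, e2]
    exact ENNReal.toReal_mono (hFne n ω) (hFanti n ω)
  have hz0 : ∀ n, 0 ≤ z n := by
    intro n
    rw [← AEEqFun.coeFn_le]
    filter_upwards [hzcoe n, AEEqFun.coeFn_zero (α := Ω) (μ := μ) (β := ℝ)] with ω e1 e0
    rw [e1, e0, Pi.zero_apply]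
    exact ENNReal.toReal_nonneg
  have hztend : ∀ᵐ ω ∂μ, Tendsto (fun n => (z n) ω) atTop (nhds 0) := by
    filter_upwards [ae_all_iff.2 hzcoe] with ω e
    have key : Tendsto (fun n => (F n ω).toReal) atTop (nhds 0) := by
      rw [Metric.tendsto_atTop]
      intro ε hε
      obtain ⟨N, hN⟩ := Metric.tendsto_atTop.1 (htend ω) (ε/2) (by linarith)
      refine ⟨N, fun n hn => ?_⟩
      have hFn : F n ω ≤ ENNReal.ofReal (ε/2) := by
        refine iSup_le fun k => ENNReal.ofReal_le_ofReal ?_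
        have := hN (n+k) (le_trans hn (Nat.le_add_right n k))
        rw [Real.dist_eq] at this
        exact this.le
      have : (F n ω).toReal ≤ ε/2 := by
        calc (F n ω).toReal ≤ (ENNReal.ofReal (ε/2)).toReal :=
          ENNReal.toReal_mono ENNReal.ofReal_ne_top hFn
        _ ≤ ε/2 := by rw [ENNReal.toReal_ofReal (by linarith)]
      rw [Real.dist_eq, sub_zero, abs_of_nonneg ENNReal.toReal_nonneg]
      linarith
    exact Tendsto.congr (fun n => (e n).symm) key
  have hdom : ∀ n, |y n - h| ≤ z n := by
    intro n
    rw [← AEEqFun.coeFn_le]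
    filter_upwards [AEEqFun.coeFn_abs (y n - h), AEEqFun.coeFn_sub (y n) h,
      AEEqFun.coeFn_mk (⇑(s n)) (hsmeas n).aestronglyMeasurable, haeq, hzcoe n]
      with ω e1 e2 e3 e4 e5
    rw [e1, e2, Pi.sub_apply, e5]
    show |(y n) ω - h ω| ≤ _
    rw [hy_def]
    simp only
    rw [e3, e4]
    have h0 : ENNReal.ofReal |s (n+0) ω - h' ω| ≤ F n ω :=
      le_iSup (fun k => ENNReal.ofReal |s (n+k) ω - h' ω|) 0
    rw [Nat.add_zero] at h0
    calc |s n ω - h' ω| = (ENNReal.ofReal |s n ω - h' ω|).toReal :=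
      (ENNReal.toReal_ofReal (abs_nonneg _)).symm
    _ ≤ (F n ω).toReal := ENNReal.toReal_mono (hFne n ω) h0
  exact mem_of_seq X hOC y h hyY hhX z hzX hzanti hz0 hztend hdom

noncomputable def Gfun (t : ℝ) : ENNReal := ENNReal.ofReal (max t 0 / (1 + max t 0))

lemma Gfun_mono : Monotone Gfun := by
  intro s t hst
  unfold Gfun
  refine ENNReal.ofReal_le_ofReal ?_
  have h0s : (0:ℝ) ≤ max s 0 := le_max_right _ _
  have h0t : (0:ℝ) ≤ max t 0 := le_max_right _ _
  have hst' : max s 0 ≤ max t 0 := max_le_max hst le_rfl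
  rw [div_le_div_iff₀ (by linarith) (by linarith)]
  nlinarith

lemma Gfun_inj {u v : ℝ} (hu : 0 ≤ u) (hv : 0 ≤ v) (h : Gfun u = Gfun v) : u = v := by
  unfold Gfun at h
  rw [max_eq_left hu, max_eq_left hv] at h
  rw [ENNReal.ofReal_eq_ofReal_iff (by positivity) (by positivity)] at h
  rw [div_eq_div_iff (by linarith) (by linarith)] at h
  nlinarith

lemma Gfun_le_one (t : ℝ) : Gfun t ≤ 1 := by
  unfold Gfun
  calc ENNReal.ofReal (max t 0 / (1 + max t 0)) ≤ ENNReal.ofReal 1 := by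
        refine ENNReal.ofReal_le_ofReal ?_
        rw [div_le_one (by positivity)]
        linarith [le_max_right t 0]
  _ = 1 := ENNReal.ofReal_one

lemma Gfun_cont : Continuous Gfun := by
  refine ENNReal.continuous_ofReal.comp ?_
  exact (continuous_id.max continuous_const).div
    (continuous_const.add (continuous_id.max continuous_const)) (fun t => by positivity)

lemma Gfun_meas : Measurable Gfun := Gfun_cont.measurable

lemma exists_seq_tendsto_zero [IsProbabilityMeasure μ]
    (X : Submodule ℝ (Ω →ₘ[μ] ℝ)) (hX : IsIdealL0 X)
    {ι : Type*} [Preorder ι] [IsDirected ι (· ≤ ·)] [Nonempty ι]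
    (z : ι → (Ω →ₘ[μ] ℝ)) (hzX : ∀ a, z a ∈ X) (hza : Antitone z) (hz0 : ∀ a, 0 ≤ z a)
    (hinf : ∀ h ∈ X, (∀ a, h ≤ z a) → h ≤ 0) (a0 : ι) :
    ∃ b : ℕ → ι, (∀ n, a0 ≤ b n) ∧
      (∀ᵐ ω ∂μ, Tendsto (fun n => (z (b n)) ω) atTop (nhds 0)) := by
  classical
  set I : ι → ENNReal := fun a => ∫⁻ ω, Gfun ((z a) ω) ∂μ with hI_def
  have hImeas : ∀ a, Measurable fun ω => Gfun ((z a) ω) :=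
    fun a => Gfun_meas.comp (z a).measurable
  have hIle : ∀ a, I a ≤ 1 := by
    intro a
    calc I a ≤ ∫⁻ _, 1 ∂μ := lintegral_mono fun ω => Gfun_le_one _
    _ = 1 := by rw [lintegral_one, measure_univ]
  set infI : ENNReal := ⨅ a, I a with hinfI_def
  have hinfI_ne : infI ≠ ⊤ := ((iInf_le I a0).trans_lt ((hIle a0).trans_lt ENNReal.one_lt_top)).ne
  have haseq : ∀ n : ℕ, ∃ a, I a < infI + ((n : ENNReal) + 1)⁻¹ := by
    intro n
    refine iInf_lt_iff.1 ?_
    exact ENNReal.lt_add_right hinfI_ne (ENNReal.inv_ne_zero.2 (by simp))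
  choose aseq haseq using haseq
  set b : ℕ → ι := fun n => Nat.rec (Classical.choose (directed_of (· ≤ ·) a0 (aseq 0)))
    (fun m bm => Classical.choose (directed_of (· ≤ ·) bm (aseq (m+1)))) n with hb_def
  have hb0 : a0 ≤ b 0 ∧ aseq 0 ≤ b 0 :=
    Classical.choose_spec (directed_of (· ≤ ·) a0 (aseq 0))
  have hbsucc : ∀ n, b n ≤ b (n+1) ∧ aseq (n+1) ≤ b (n+1) :=
    fun n => Classical.choose_spec (directed_of (· ≤ ·) (b n) (aseq (n+1)))
  have hbmono : Monotone b := monotone_nat_of_le_succ fun n => (hbsucc n).1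
  have hba0 : ∀ n, a0 ≤ b n := fun n => hb0.1.trans (hbmono (Nat.zero_le n))
  have haseq_le_b : ∀ n, aseq n ≤ b n := by
    intro n
    cases n with
    | zero => exact hb0.2
    | succ m => exact (hbsucc m).2
  have hIb : ∀ n, I (b n) < infI + ((n : ENNReal) + 1)⁻¹ := by
    intro n
    refine lt_of_le_of_lt ?_ (haseq n)
    refine lintegral_mono_ae ?_
    filter_upwards [AEEqFun.coeFn_le.2 (hza (haseq_le_b n))] with ω e
    exact Gfun_mono e
  -- the lower envelope
  set W : Ω → ENNReal := fun ω => ⨅ n, ENNReal.ofReal ((z (b n)) ω) with hW_def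
  have hWmeas : Measurable W :=
    Measurable.iInf fun n => ENNReal.measurable_ofReal.comp (z (b n)).measurable
  set w : Ω → ℝ := fun ω => (W ω).toReal with hw_def
  have hwmeas : Measurable w := ENNReal.measurable_toReal.comp hWmeas
  have hnn : ∀ᵐ ω ∂μ, ∀ n, 0 ≤ (z (b n)) ω := by
    rw [ae_all_iff]
    intro n
    filter_upwards [AEEqFun.coeFn_le.2 (hz0 (b n)),
      AEEqFun.coeFn_zero (α := Ω) (μ := μ) (β := ℝ)] with ω e1 e2
    rw [e2] at e1
    exact e1
  have hmono : ∀ᵐ ω ∂μ, ∀ n, (z (b (n+1))) ω ≤ (z (b n)) ω :=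
    ae_all_iff.2 fun n => AEEqFun.coeFn_le.2 (hza (hbsucc n).1)
  have hkey : ∀ᵐ ω ∂μ, Tendsto (fun n => (z (b n)) ω) atTop (nhds (w ω))
      ∧ (∀ n, w ω ≤ (z (b n)) ω) ∧ 0 ≤ w ω := by
    filter_upwards [hnn, hmono] with ω e1 e2
    have hanti : Antitone fun n => (z (b n)) ω := antitone_nat_of_succ_le e2
    have hWanti : Antitone fun n => ENNReal.ofReal ((z (b n)) ω) :=
      fun n m hnm => ENNReal.ofReal_le_ofReal (hanti hnm)
    have htendW : Tendsto (fun n => ENNReal.ofReal ((z (b n)) ω)) atTop (nhds (W ω)) :=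
      tendsto_atTop_iInf hWanti
    have hWne : W ω ≠ ⊤ := by
      have h0 : W ω ≤ ENNReal.ofReal ((z (b 0)) ω) :=
        iInf_le (fun n => ENNReal.ofReal ((z (b n)) ω)) 0
      exact (h0.trans_lt ENNReal.ofReal_lt_top).ne
    refine ⟨?_, ?_, ENNReal.toReal_nonneg⟩
    · have := (ENNReal.tendsto_toReal hWne).comp htendW
      refine this.congr fun n => ?_
      exact ENNReal.toReal_ofReal (e1 n)
    · intro n
      have : W ω ≤ ENNReal.ofReal ((z (b n)) ω) := iInf_le _ n
      calc w ω ≤ (ENNReal.ofReal ((z (b n)) ω)).toReal :=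
        ENNReal.toReal_mono ENNReal.ofReal_ne_top this
      _ = (z (b n)) ω := ENNReal.toReal_ofReal (e1 n)
  set mkw : Ω →ₘ[μ] ℝ := AEEqFun.mk w hwmeas.aestronglyMeasurable with hmkw_def
  have hmkwcoe : ∀ᵐ ω ∂μ, mkw ω = w ω := AEEqFun.coeFn_mk _ _
  have hmkwX : mkw ∈ X := by
    refine hX _ (z (b 0)) (abs_le_abs_of_ae ?_) (hzX (b 0))
    filter_upwards [hmkwcoe, hkey] with ω e1 ⟨_, e2, e3⟩
    rw [e1, abs_of_nonneg e3, abs_of_nonneg (e3.trans (e2 0))]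
    exact e2 0
  -- ∫ G(w) ≤ infI
  have hGwle : ∫⁻ ω, Gfun (w ω) ∂μ ≤ infI := by
    have hle_n : ∀ n : ℕ, ∫⁻ ω, Gfun (w ω) ∂μ ≤ infI + ((n : ENNReal) + 1)⁻¹ := by
      intro n
      refine le_trans (lintegral_mono_ae ?_) (hIb n).le
      filter_upwards [hkey] with ω ⟨_, e2, _⟩
      exact Gfun_mono (e2 n)
    have htend : Tendsto (fun n : ℕ => infI + ((n : ENNReal) + 1)⁻¹) atTop (nhds (infI + 0)) := by
      refine Tendsto.const_add _ ?_
      have h1 : Tendsto (fun n : ℕ => ((n+1 : ℕ) : ENNReal)⁻¹) atTop (nhds 0) :=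
        ENNReal.tendsto_inv_nat_nhds_zero.comp (tendsto_add_atTop_nat 1)
      refine h1.congr fun n => ?_
      push_cast
      rfl
    rw [add_zero] at htend
    exact ge_of_tendsto htend (Eventually.of_forall hle_n)
  -- mkw is a lower bound of all z a
  have hlb : ∀ a, mkw ≤ z a := by
    intro a
    set d : ℕ → ι := fun n => Classical.choose (directed_of (· ≤ ·) (b n) a) with hd_def
    have hd : ∀ n, b n ≤ d n ∧ a ≤ d n :=
      fun n => Classical.choose_spec (directed_of (· ≤ ·) (b n) a)
    have hstep1 : ∀ n, infI ≤ ∫⁻ ω, Gfun (min ((z (b n)) ω) ((z a) ω)) ∂μ := by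
      intro n
      refine le_trans (iInf_le I (d n)) (lintegral_mono_ae ?_)
      filter_upwards [AEEqFun.coeFn_le.2 (hza (hd n).1),
        AEEqFun.coeFn_le.2 (hza (hd n).2)] with ω e1 e2
      exact Gfun_mono (le_min e1 e2)
    have hstep2 : Tendsto (fun n => ∫⁻ ω, Gfun (min ((z (b n)) ω) ((z a) ω)) ∂μ) atTop
        (nhds (∫⁻ ω, Gfun (min (w ω) ((z a) ω)) ∂μ)) := by
      refine tendsto_lintegral_of_dominated_convergence (fun _ => 1)
        (fun n => Gfun_meas.comp ((z (b n)).measurable.min (z a).measurable))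
        (fun n => Eventually.of_forall fun ω => Gfun_le_one _) ?_ ?_
      · rw [lintegral_one, measure_univ]
        exact ENNReal.one_ne_top
      · filter_upwards [hkey] with ω ⟨e1, _, _⟩
        exact (Gfun_cont.tendsto _).comp (e1.min tendsto_const_nhds)
    have hstep3 : infI ≤ ∫⁻ ω, Gfun (min (w ω) ((z a) ω)) ∂μ :=
      ge_of_tendsto hstep2 (Eventually.of_forall hstep1)
    have heq : (fun ω => Gfun (min (w ω) ((z a) ω))) =ᵐ[μ] fun ω => Gfun (w ω) := by
      refine ae_eq_of_ae_le_of_lintegral_le (Eventually.of_forall fun ω =>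
        Gfun_mono (min_le_left _ _)) ?_ (Gfun_meas.comp hwmeas).aemeasurable
        (hGwle.trans hstep3)
      refine ((lintegral_mono fun ω => Gfun_le_one _).trans_lt ?_).ne
      rw [lintegral_one, measure_univ]
      exact ENNReal.one_lt_top
    rw [← AEEqFun.coeFn_le]
    filter_upwards [heq, hkey, hmkwcoe, AEEqFun.coeFn_le.2 (hz0 a),
      AEEqFun.coeFn_zero (α := Ω) (μ := μ) (β := ℝ)] with ω e1 ⟨_, _, e3⟩ e4 e5 e6
    rw [e6] at e5
    have hmin : min (w ω) ((z a) ω) = w ω :=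
      Gfun_inj (le_min e3 e5) e3 e1
    rw [e4]
    exact min_eq_left_iff.1 hmin
  -- conclude w = 0 a.e.
  have hw0 : ∀ᵐ ω ∂μ, w ω = 0 := by
    have hle0 := AEEqFun.coeFn_le.2 (hinf mkw hmkwX hlb)
    filter_upwards [hle0, hmkwcoe, hkey,
      AEEqFun.coeFn_zero (α := Ω) (μ := μ) (β := ℝ)] with ω e1 e2 ⟨_, _, e3⟩ e4
    rw [e2, e4] at e1
    exact le_antisymm e1 e3
  refine ⟨b, hba0, ?_⟩
  filter_upwards [hkey, hw0] with ω ⟨e1, _, _⟩ e2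
  rw [e2] at e1
  exact e1

lemma measurable_limsup_real {α : Type*} [MeasurableSpace α] (g : ℕ → α → ℝ)
    (hg : ∀ n, Measurable (g n)) :
    Measurable (fun ω => (Filter.limsup (fun n => ((g n ω : ℝ) : EReal)) atTop).toReal) :=
  measurable_ereal_toReal.comp
    (Measurable.limsup (fun n => measurable_coe_real_ereal.comp (hg n)))

end L22Aux
end Aux2


open L22Aux

/-- Lemma 2.2: For a sublattice `Y` (with `1 ∈ Y`) of an ideal `X` of `L⁰`
containing the constants, `Y` is order closed in `X` iff `Y = L⁰(σ(Y)) ∩ X`, where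
`σ(Y)` is the σ-algebra generated by the members of `Y` (null sets are accounted for by
allowing modification on a null set). -/
theorem orderClosed_iff_eq_measurable_inter
    {m0 : MeasurableSpace Ω} {μ : Measure Ω} [IsProbabilityMeasure μ]
    (X : Submodule ℝ (Ω →ₘ[μ] ℝ)) (hX : IsIdealL0 X)
    (hconst : ∀ c : ℝ, AEEqFun.const Ω (β := ℝ) c ∈ X)
    (Y : Submodule ℝ (Ω →ₘ[μ] ℝ)) (hYX : (Y : Set (Ω →ₘ[μ] ℝ)) ⊆ X)
    (hsub : ∀ y ∈ Y, |y| ∈ Y) (h1 : (1 : Ω →ₘ[μ] ℝ) ∈ Y) :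
    OrderClosedIn X (Y : Set (Ω →ₘ[μ] ℝ)) ↔
      ∀ h : Ω →ₘ[μ] ℝ, h ∈ Y ↔
        (h ∈ X ∧ ∃ h' : Ω → ℝ,
          Measurable[⨆ g ∈ (Y : Set (Ω →ₘ[μ] ℝ)), MeasurableSpace.comap (⇑g)
            (inferInstance : MeasurableSpace ℝ)] h' ∧ ⇑h =ᵐ[μ] h') := by
  constructor
  · -- forward
    intro hOC h
    constructor
    · intro hh
      refine ⟨hYX hh, ⇑h, ?_, EventuallyEq.rfl⟩
      have h1m : Measurable[MeasurableSpace.comap (⇑h) (inferInstance : MeasurableSpace ℝ)] ⇑h :=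
        Measurable.of_comap_le le_rfl
      exact h1m.mono
        (le_iSup₂ (f := fun (g : Ω →ₘ[μ] ℝ) (_ : g ∈ (Y : Set (Ω →ₘ[μ] ℝ))) =>
          MeasurableSpace.comap (⇑g) (inferInstance : MeasurableSpace ℝ)) h hh) le_rfl
    · rintro ⟨hhX, h', hm, hae⟩
      have hm'le : (⨆ g ∈ (Y : Set (Ω →ₘ[μ] ℝ)), MeasurableSpace.comap (⇑g)
          (inferInstance : MeasurableSpace ℝ)) ≤ m0 :=
        iSup_le fun g => iSup_le fun _ => g.measurable.comap_le
      have hm'D : ∀ s : Set Ω, MeasurableSet[⨆ g ∈ (Y : Set (Ω →ₘ[μ] ℝ)),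
          MeasurableSpace.comap (⇑g) (inferInstance : MeasurableSpace ℝ)] s → pY μ Y s := by
        have hle : (⨆ g ∈ (Y : Set (Ω →ₘ[μ] ℝ)), MeasurableSpace.comap (⇑g)
            (inferInstance : MeasurableSpace ℝ)) ≤ sigmaD μ X hX hconst hYX hsub h1 hOC :=
          iSup_le fun g => iSup_le fun hg => comap_le_sigmaD X hX hconst hYX hsub h1 hOC hg
        exact fun s hs => hle s hs
      exact mem_Y_of_measurable X hX hYX hOC hm'le hm'D hhX hm hae
  · -- backward
    intro hchar
    intro ι iPre iDir iNe y x hy hxX hconv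
    obtain ⟨z, hzX, hza, hz0, hinf, hev⟩ := hconv
    -- extract a starting index
    have hset : {a : ι | |y a - x| ≤ z a} ∈ (atTop : Filter ι) := hev
    have ha0 : ∃ a0 : ι, ∀ a, a0 ≤ a → |y a - x| ≤ z a := by
      rw [atTop, Filter.mem_iInf_of_directed] at hset
      · obtain ⟨a0, ha0⟩ := hset
        exact ⟨a0, fun a ha => ha0 ha⟩
      · intro a b
        obtain ⟨c, hc1, hc2⟩ := directed_of (· ≤ ·) a b
        exact ⟨c, Filter.principal_mono.2 (Set.Ici_subset_Ici.2 hc1),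
          Filter.principal_mono.2 (Set.Ici_subset_Ici.2 hc2)⟩
    obtain ⟨a0, ha0⟩ := ha0
    obtain ⟨b, hba0, hztend⟩ := exists_seq_tendsto_zero X hX z hzX hza hz0 hinf a0
    have hdom : ∀ n, |y (b n) - x| ≤ z (b n) := fun n => ha0 _ (hba0 n)
    have edom : ∀ᵐ ω ∂μ, ∀ n, |(y (b n)) ω - x ω| ≤ (z (b n)) ω := by
      rw [ae_all_iff]
      intro n
      filter_upwards [AEEqFun.coeFn_le.2 (hdom n), AEEqFun.coeFn_abs (y (b n) - x),
        AEEqFun.coeFn_sub (y (b n)) x] with ω e1 e2 e3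
      rw [e2, e3, Pi.sub_apply] at e1
      exact e1
    have hytend : ∀ᵐ ω ∂μ, Tendsto (fun n => (y (b n)) ω) atTop (nhds (x ω)) := by
      filter_upwards [edom, hztend] with ω e1 e2
      have habs : Tendsto (fun n => |(y (b n)) ω - x ω|) atTop (nhds 0) :=
        squeeze_zero (fun n => abs_nonneg _) e1 e2
      rw [tendsto_iff_dist_tendsto_zero]
      exact habs.congr fun n => (Real.dist_eq _ _).symm
    -- measurable representatives
    have hgn : ∀ n, ∃ g' : Ω → ℝ,
        Measurable[⨆ g ∈ (Y : Set (Ω →ₘ[μ] ℝ)), MeasurableSpace.comap (⇑g)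
          (inferInstance : MeasurableSpace ℝ)] g' ∧ ⇑(y (b n)) =ᵐ[μ] g' :=
      fun n => ((hchar (y (b n))).1 (hy (b n))).2
    choose g hgmeas hgae using hgn
    refine (hchar x).2 ⟨hxX, fun ω => (Filter.limsup (fun n => ((g n ω : ℝ) : EReal)) atTop).toReal,
      ?_, ?_⟩
    · exact @measurable_limsup_real Ω (⨆ g ∈ (Y : Set (Ω →ₘ[μ] ℝ)), MeasurableSpace.comap (⇑g)
        (inferInstance : MeasurableSpace ℝ)) g hgmeas
    · filter_upwards [hytend, ae_all_iff.2 hgae] with ω e1 e2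
      have hgt : Tendsto (fun n => g n ω) atTop (nhds (x ω)) :=
        e1.congr fun n => e2 n
      have : Tendsto (fun n => ((g n ω : ℝ) : EReal)) atTop (nhds ((x ω : ℝ) : EReal)) :=
        (continuous_coe_real_ereal.tendsto _).comp hgt
      rw [this.limsup_eq, EReal.toReal_coe]
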